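/- The two binomial ideals associated to L coincide: the ideal I_≡(L) generated by {X^u − X^v : u, v ∈ (Fin n → ℕ), π(u) − π(v) ∈ L} equals the ideal I₁(L) generated by {X^{lift(c)} − 1 : c ∈ L} ∪ {X_i^{g i} − 1 : i ∈ Fin n} in the polynomial ring MvPolynomial (Fin n) (ZMod 2). -/

import Mathlib

open MvPolynomial

private lemma monomial_one_eq_prod {n : ℕ} (s : Fin n →₀ ℕ) :
    monomial s (1 : ZMod 2) = ∏ i, X i ^ s i := by
  rw [monomial_eq, C_1, one_mul, Finsupp.prod_fintype]
  intro i; exact pow_zero _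

private lemma key {n : ℕ} (g : Fin n → ℕ)
    (I : Ideal (MvPolynomial (Fin n) (ZMod 2)))
    (hXg : ∀ i, X i ^ g i - 1 ∈ I)
    (a b : Fin n →₀ ℕ) (hab : ∀ i, a i % g i = b i % g i) :
    monomial a (1 : ZMod 2) - monomial b 1 ∈ I := by
  rw [← Ideal.Quotient.eq]
  have h1 : ∀ i, (Ideal.Quotient.mk I (X i)) ^ (g i) = 1 := by
    intro i
    have := Ideal.Quotient.eq_zero_iff_mem.mpr (hXg i)
    rw [map_sub, map_pow, map_one, sub_eq_zero] at this
    exact this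
  have h2 : ∀ s : Fin n →₀ ℕ, Ideal.Quotient.mk I (monomial s (1 : ZMod 2)) =
      ∏ i, (Ideal.Quotient.mk I (X i)) ^ (s i % g i) := by
    intro s
    rw [monomial_one_eq_prod, map_prod]
    refine Finset.prod_congr rfl fun i _ => ?_
    rw [map_pow, pow_eq_pow_mod (s i) (h1 i)]
  rw [h2, h2]
  exact Finset.prod_congr rfl fun i _ => by rw [hab i]

/-- The binomial ideal `I_≡(L)` generated by
`{X^u - X^v : π(u) - π(v) ∈ L}` (with `π` componentwise reduction mod `g i`)
equals the ideal `I₁(L)` generated by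
`{X^(lift c) - 1 : c ∈ L} ∪ {X i ^ g i - 1 : i}` in `MvPolynomial (Fin n) (ZMod 2)`. -/
theorem stmt_4 (n : ℕ) (g : Fin n → ℕ) (hg : ∀ i, 1 ≤ g i)
    (L : AddSubgroup (∀ i, ZMod (g i))) :
    Ideal.span { p : MvPolynomial (Fin n) (ZMod 2) |
        ∃ u v : Fin n →₀ ℕ,
          (fun i => ((u i : ZMod (g i)) - (v i : ZMod (g i)))) ∈ L ∧
          p = monomial u (1 : ZMod 2) - monomial v (1 : ZMod 2) } =
    Ideal.span
      ({ p : MvPolynomial (Fin n) (ZMod 2) |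
          ∃ c ∈ L, p = monomial
            (Finsupp.equivFunOnFinite.symm fun i => (c i).val) (1 : ZMod 2) - 1 } ∪
       { p : MvPolynomial (Fin n) (ZMod 2) |
          ∃ i : Fin n, p = X i ^ g i - 1 }) := by
  haveI : ∀ i, NeZero (g i) := fun i => ⟨by have := hg i; omega⟩
  have hcv : ∀ (c : ∀ i, ZMod (g i)) (i : Fin n), (((c i).val : ℕ) : ZMod (g i)) = c i :=
    fun c i => ZMod.natCast_rightInverse (c i)
  apply le_antisymm
  · rw [Ideal.span_le]
    rintro p ⟨u, v, hmem, rfl⟩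
    set c : ∀ i, ZMod (g i) := fun i => ((u i : ZMod (g i)) - (v i : ZMod (g i))) with hc
    set w : Fin n →₀ ℕ := Finsupp.equivFunOnFinite.symm (fun i => (c i).val) + v with hw
    have hXg : ∀ i, X i ^ g i - 1 ∈ Ideal.span
        ({ p : MvPolynomial (Fin n) (ZMod 2) |
            ∃ c ∈ L, p = monomial
              (Finsupp.equivFunOnFinite.symm fun i => (c i).val) (1 : ZMod 2) - 1 } ∪
         { p : MvPolynomial (Fin n) (ZMod 2) |
            ∃ i : Fin n, p = X i ^ g i - 1 }) :=
      fun i => Ideal.subset_span (Or.inr ⟨i, rfl⟩)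
    have hcong : ∀ i, u i % g i = w i % g i := by
      intro i
      have : (u i : ZMod (g i)) = ((w i : ℕ) : ZMod (g i)) := by
        have : w i = (c i).val + v i := by
          simp [hw, Finsupp.equivFunOnFinite]; rfl
        rw [this, Nat.cast_add, hcv c i, hc]
        ring
      exact (ZMod.natCast_eq_natCast_iff _ _ _).mp this
    have hsplit : monomial u (1 : ZMod 2) - monomial v 1 =
        (monomial u (1 : ZMod 2) - monomial w 1) +
        (monomial w (1 : ZMod 2) - monomial v 1) := by ring
    rw [hsplit]
    refine add_mem (key g _ hXg u w hcong) ?_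
    have : monomial w (1 : ZMod 2) - monomial v 1 =
        monomial v 1 * (monomial (Finsupp.equivFunOnFinite.symm fun i => (c i).val)
          (1 : ZMod 2) - 1) := by
      rw [mul_sub, mul_one, monomial_mul, one_mul, hw, add_comm]
    rw [this]
    exact Ideal.mul_mem_left _ _ (Ideal.subset_span (Or.inl ⟨c, hmem, rfl⟩))
  · rw [Ideal.span_le]
    rintro p (⟨c, hc, rfl⟩ | ⟨i, rfl⟩)
    · refine Ideal.subset_span
        ⟨Finsupp.equivFunOnFinite.symm (fun i => (c i).val), 0, ?_, ?_⟩
      · have : (fun i => (((Finsupp.equivFunOnFinite.symm fun j => (c j).val) i : ℕ) :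
            ZMod (g i)) - (((0 : Fin n →₀ ℕ) i : ℕ) : ZMod (g i))) = c := by
          funext i
          simp [Finsupp.equivFunOnFinite, hcv c i]; exact hcv c i
        rw [this]; exact hc
      · rw [monomial_zero', C_1]
    · refine Ideal.subset_span ⟨Finsupp.single i (g i), 0, ?_, ?_⟩
      · have : (fun j => (((Finsupp.single i (g i)) j : ℕ) : ZMod (g j)) -
            (((0 : Fin n →₀ ℕ) j : ℕ) : ZMod (g j))) = 0 := by
          funext j
          by_cases h : j = i
          · subst h; simp
          · simp [Finsupp.single_apply, Ne.symm h]
        rw [this]; exact zero_mem L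
      · rw [monomial_zero', C_1, X_pow_eq_monomial]
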